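/- Let H be a real Hilbert space, let T be a bounded linear operator on H with ‖T‖ = 1, and suppose M_T = S_{H₀} where H₀ is an infinite dimensional closed subspace of H. Then for every ε ∈ [0,1) there exists a bounded linear operator A on H with ‖A‖ = 1 such that T ⊥_B^ε A, while |⟨Tx, Ax⟩| > ε‖T‖‖A‖ for every x ∈ M_T. -/

import Mathlib

open RealInnerProductSpace
open scoped ENNReal

section MulOp

variable {ι : Type*} (w : ι → ℝ) (hw : ∀ i, 0 ≤ w i ∧ w i ≤ 1)

set_option linter.unusedSectionVars false

lemma aux_inner_lp_eq (u v : lp (fun _ : ι => ℝ) 2) : ⟪u, v⟫ = ∑' i, u i * v i := by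
  rw [lp.inner_eq_tsum]
  exact tsum_congr fun i => by simp [RCLike.inner_apply, mul_comm]

lemma aux_summable_mul (u v : lp (fun _ : ι => ℝ) 2) : Summable fun i => u i * v i := by
  have := lp.summable_inner (𝕜 := ℝ) u v
  simpa [RCLike.inner_apply, mul_comm] using this

include hw in
lemma aux_memℓp_mul (g : lp (fun _ : ι => ℝ) 2) : Memℓp (fun i => w i * g i) 2 := by
  apply memℓp_gen
  have hs := (lp.memℓp g).summable (by norm_num : 0 < (2 : ℝ≥0∞).toReal)
  refine Summable.of_nonneg_of_le (fun i => ?_) (fun i => ?_) hs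
  · positivity
  · apply Real.rpow_le_rpow (norm_nonneg _) _ (by norm_num)
    rw [norm_mul]
    refine mul_le_of_le_one_left (norm_nonneg _) ?_
    rw [Real.norm_eq_abs, abs_le]
    exact ⟨by linarith [(hw i).1], (hw i).2⟩

/-- The element of `ℓ²` obtained by pointwise multiplication with `w`. -/
noncomputable def mulElem (g : lp (fun _ : ι => ℝ) 2) : lp (fun _ : ι => ℝ) 2 :=
  ⟨fun i => w i * g i, aux_memℓp_mul w hw g⟩

lemma mulElem_apply (g : lp (fun _ : ι => ℝ) 2) (i : ι) :
    (mulElem w hw g : ∀ _ : ι, ℝ) i = w i * g i := rfl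

lemma norm_mulElem_le (g : lp (fun _ : ι => ℝ) 2) : ‖mulElem w hw g‖ ≤ ‖g‖ := by
  have hsq : ‖mulElem w hw g‖ ^ 2 ≤ ‖g‖ ^ 2 := by
    rw [← real_inner_self_eq_norm_sq, ← real_inner_self_eq_norm_sq,
      aux_inner_lp_eq, aux_inner_lp_eq]
    refine Summable.tsum_le_tsum (fun i => ?_) ?_ ?_
    · rw [mulElem_apply]
      have h1 : (0:ℝ) ≤ (1 - w i) * (1 + w i) * (g i * g i) := by
        apply mul_nonneg (mul_nonneg (by linarith [(hw i).2]) (by linarith [(hw i).1]))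
        exact mul_self_nonneg _
      nlinarith
    · have := aux_summable_mul (mulElem w hw g) (mulElem w hw g)
      simpa [mulElem_apply] using this
    · exact aux_summable_mul g g
  nlinarith [norm_nonneg (mulElem w hw g), norm_nonneg g]

/-- Pointwise multiplication by a `[0,1]`-valued weight as a continuous linear map on `ℓ²`. -/
noncomputable def mulOp : lp (fun _ : ι => ℝ) 2 →L[ℝ] lp (fun _ : ι => ℝ) 2 :=
  LinearMap.mkContinuous
    { toFun := mulElem w hw
      map_add' := by
        intro g h
        apply lp.ext
        funext i
        rw [mulElem_apply, lp.coeFn_add, Pi.add_apply, lp.coeFn_add, Pi.add_apply,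
          mulElem_apply, mulElem_apply]
        ring
      map_smul' := by
        intro c g
        apply lp.ext
        funext i
        rw [RingHom.id_apply, mulElem_apply, lp.coeFn_smul, Pi.smul_apply, lp.coeFn_smul,
          Pi.smul_apply, mulElem_apply, smul_eq_mul, smul_eq_mul]
        ring }
    1 (fun g => by simpa using norm_mulElem_le w hw g)

lemma mulOp_apply (g : lp (fun _ : ι => ℝ) 2) : mulOp w hw g = mulElem w hw g := rfl

lemma mulElem_single [DecidableEq ι] (i : ι) :
    mulElem w hw (lp.single 2 i 1) = w i • lp.single 2 i 1 := by
  apply lp.ext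
  funext j
  rw [mulElem_apply, lp.coeFn_smul, Pi.smul_apply, smul_eq_mul]
  by_cases h : j = i
  · subst h; rfl
  · simp [lp.single_apply, h]

end MulOp

open Filter in
/-- Auxiliary construction: on an infinite-dimensional real Hilbert space there is a
contraction `S` attaining norm one, whose (real) numerical range lies strictly above `ε`,
with eigenvalues `ε + (1-ε)/2^n` on an orthonormal sequence. -/
lemma exists_good_contraction {E : Type*} [NormedAddCommGroup E] [InnerProductSpace ℝ E]
    [CompleteSpace E] (hinf : ¬ FiniteDimensional ℝ E)
    {ε : ℝ} (hε0 : 0 ≤ ε) (hε1 : ε < 1) :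
    ∃ S : E →L[ℝ] E, (∀ x, ‖S x‖ ≤ ‖x‖) ∧ (∃ x₀ : E, ‖x₀‖ = 1 ∧ S x₀ = x₀) ∧
      (∀ x : E, x ≠ 0 → ε * ‖x‖ ^ 2 < ⟪x, S x⟫) ∧
      (∃ u : ℕ → E, (∀ n, ‖u n‖ = 1) ∧ ∀ n, S (u n) = (ε + (1 - ε) / 2 ^ n) • u n) := by
  classical
  obtain ⟨ws, b, hb⟩ := exists_hilbertBasis ℝ E
  haveI : Infinite ws := by
    rw [Set.infinite_coe_iff]
    intro hfin
    apply hinf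
    have h1 : FiniteDimensional ℝ (Submodule.span ℝ (Set.range ⇑b)) := by
      apply FiniteDimensional.span_of_finite
      rw [hb]
      simpa using hfin
    have h2 := b.dense_span
    rw [IsClosed.submodule_topologicalClosure_eq
      (Submodule.closed_of_finiteDimensional _)] at h2
    rw [h2] at h1
    exact Module.Finite.equiv (Submodule.topEquiv (R := ℝ) (M := E))
  set f : ℕ ↪ ws := Infinite.natEmbedding ws with hf
  set w : ws → ℝ := fun i =>
    if h : ∃ n, f n = i then ε + (1 - ε) / 2 ^ (Nat.find h) else (1 + ε) / 2 with hwdef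
  have hwf : ∀ n, w (f n) = ε + (1 - ε) / 2 ^ n := by
    intro n
    have hex : ∃ m, f m = f n := ⟨n, rfl⟩
    have : Nat.find hex = n := f.injective (Nat.find_spec hex)
    rw [hwdef]
    simp only [dif_pos hex, this]
  have hwε : ∀ i, ε < w i := by
    intro i
    rw [hwdef]
    dsimp only
    split
    · have h0 : (0:ℝ) < (1 - ε) / 2 ^ (Nat.find ‹∃ n, f n = i›) :=
        div_pos (by linarith) (by positivity)
      linarith
    · linarith
  have hw1 : ∀ i, w i ≤ 1 := by
    intro i
    rw [hwdef]
    dsimp only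
    split
    · have h2 : (1 - ε) / 2 ^ (Nat.find ‹∃ n, f n = i›) ≤ 1 - ε :=
        div_le_self (by linarith) (one_le_pow₀ (by norm_num))
      linarith
    · linarith
  have hw : ∀ i, 0 ≤ w i ∧ w i ≤ 1 :=
    fun i => ⟨le_of_lt (lt_of_le_of_lt hε0 (hwε i)), hw1 i⟩
  set S : E →L[ℝ] E :=
    (b.repr.symm.toLinearIsometry.toContinuousLinearMap.comp
      ((mulOp w hw).comp b.repr.toLinearIsometry.toContinuousLinearMap)) with hS
  have hS_apply : ∀ x, S x = b.repr.symm (mulElem w hw (b.repr x)) := fun _ => rfl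
  have hSb : ∀ i : ws, S (b i) = w i • b i := by
    intro i
    rw [hS_apply]
    rw [show b.repr (b i) = lp.single 2 i 1 from b.repr_self i]
    rw [mulElem_single, map_smul, b.repr_symm_single]
  have hbnorm : ∀ i : ws, ‖b i‖ = 1 := fun i => b.orthonormal.1 i
  refine ⟨S, ?_, ⟨b (f 0), hbnorm _, ?_⟩, ?_, ⟨fun n => b (f n), fun n => hbnorm _, ?_⟩⟩
  · intro x
    rw [hS_apply, b.repr.symm.norm_map]
    calc ‖mulElem w hw (b.repr x)‖ ≤ ‖b.repr x‖ := norm_mulElem_le w hw _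
      _ = ‖x‖ := b.repr.norm_map x
  · rw [hSb, hwf]
    norm_num
  · intro x hx
    set g := b.repr x with hg
    obtain ⟨i₀, hi₀⟩ : ∃ i, (g : ∀ _ : ws, ℝ) i ≠ 0 := by
      by_contra hall
      push_neg at hall
      apply hx
      have hg0 : g = 0 := by
        apply lp.ext
        funext i
        rw [lp.coeFn_zero, Pi.zero_apply]
        exact hall i
      exact b.repr.injective (hg0.trans (map_zero _).symm)
    have e1 : ⟪x, S x⟫ = ∑' i, g i * (w i * g i) := by
      rw [hS_apply]
      have h3 := LinearIsometryEquiv.inner_map_map (𝕜 := ℝ) b.repr.symm (b.repr x)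
        (mulElem w hw (b.repr x))
      rw [b.repr.symm_apply_apply] at h3
      rw [h3, aux_inner_lp_eq]
      exact tsum_congr fun i => by rw [mulElem_apply]
    have e2 : ‖x‖ ^ 2 = ∑' i, g i * g i := by
      rw [← b.repr.norm_map x, ← real_inner_self_eq_norm_sq, aux_inner_lp_eq]
    have hs1 : Summable fun i => g i * (w i * g i) := by
      have := aux_summable_mul g (mulElem w hw g)
      simpa [mulElem_apply] using this
    have hs2 : Summable fun i => g i * g i := aux_summable_mul g g
    rw [e1, e2, ← sub_pos, ← tsum_mul_left, ← Summable.tsum_sub hs1 (hs2.mul_left ε)]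
    refine Summable.tsum_pos (hs1.sub (hs2.mul_left ε)) (fun i => ?_) i₀ ?_
    · have h4 : g i * (w i * g i) - ε * (g i * g i) = (w i - ε) * (g i * g i) := by ring
      rw [h4]
      exact mul_nonneg (by linarith [hwε i]) (mul_self_nonneg _)
    · have h4 : g i₀ * (w i₀ * g i₀) - ε * (g i₀ * g i₀) = (w i₀ - ε) * (g i₀ * g i₀) := by ring
      rw [h4]
      apply mul_pos (by linarith [hwε i₀])
      rcases lt_or_gt_of_ne hi₀ with h | h
      · nlinarith
      · nlinarith
  · intro n
    rw [hSb, hwf]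

set_option maxHeartbeats 1000000 in
open Filter in
/-- If the norm attainment set of a norm-one bounded operator `T` on a real Hilbert
space is the unit sphere of an infinite dimensional closed subspace `H₀`, then for
every `ε ∈ [0,1)` there is a norm-one operator `A` with `T ⊥_B^ε A` but
`|⟨Tx, Ax⟩| > ε‖T‖‖A‖` for every norm attaining unit vector `x` of `T`. -/
theorem exists_counterexample_of_infinite_dimensional_norm_attainment
    {H : Type*} [NormedAddCommGroup H] [InnerProductSpace ℝ H] [CompleteSpace H]
    (T : H →L[ℝ] H) (hTnorm : ‖T‖ = 1)
    (H₀ : Submodule ℝ H) (hclosed : IsClosed (H₀ : Set H))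
    (hinf : ¬ FiniteDimensional ℝ H₀)
    (hMT : {x : H | ‖x‖ = 1 ∧ ‖T x‖ = ‖T‖} = {x : H | x ∈ H₀ ∧ ‖x‖ = 1})
    (ε : ℝ) (hε0 : 0 ≤ ε) (hε1 : ε < 1) :
    ∃ A : H →L[ℝ] H, ‖A‖ = 1 ∧
      (∀ l : ℝ, ‖T + l • A‖ ^ 2 ≥ ‖T‖ ^ 2 - 2 * ε * ‖T‖ * ‖l • A‖) ∧
      (∀ x : H, ‖x‖ = 1 → ‖T x‖ = ‖T‖ → |⟪T x, A x⟫| > ε * ‖T‖ * ‖A‖) := by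
  haveI : CompleteSpace H₀ := hclosed.completeSpace_coe
  -- `T` is isometric on `H₀`
  have hiso : ∀ y : H₀, ‖T ↑y‖ = ‖y‖ := by
    intro y
    by_cases hy : y = 0
    · subst hy; simp
    · have hc : 0 < ‖(y : H)‖ := by
        simpa using norm_pos_iff.2 (fun h => hy (Subtype.ext (by simpa using h)))
      have hz : (‖(y:H)‖⁻¹ • (y:H)) ∈ {x : H | x ∈ H₀ ∧ ‖x‖ = 1} := by
        refine ⟨H₀.smul_mem _ y.2, ?_⟩
        rw [norm_smul, norm_inv, norm_norm]
        field_simp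
      rw [← hMT] at hz
      have h2 := hz.2
      rw [map_smul, norm_smul, norm_inv, norm_norm, hTnorm] at h2
      have : ‖T ↑y‖ = ‖(y:H)‖ := by
        field_simp at h2
        linarith [h2]
      simpa using this
  -- hence `T` preserves inner products on `H₀`
  have hinner : ∀ y z : H₀, ⟪T ↑y, T ↑z⟫ = ⟪(y : H), (z : H)⟫ := by
    intro y z
    rw [real_inner_eq_norm_add_mul_self_sub_norm_mul_self_sub_norm_mul_self_div_two,
      real_inner_eq_norm_add_mul_self_sub_norm_mul_self_sub_norm_mul_self_div_two]
    have h1 : T ↑y + T ↑z = T ↑(y + z) := by rw [Submodule.coe_add, map_add]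
    have h2 : (y : H) + (z : H) = ↑(y + z) := rfl
    rw [h1, h2, hiso, hiso, hiso]
    rfl
  obtain ⟨S, hS1, ⟨x₀, hx₀n, hx₀⟩, hSpos, ⟨u, hun, huS⟩⟩ :=
    exists_good_contraction (E := H₀) hinf hε0 hε1
  set P := Submodule.orthogonalProjectionOnto H₀ with hP
  set A : H →L[ℝ] H := T.comp ((H₀.subtypeL.comp S).comp P) with hA
  have hA_apply : ∀ x : H, A x = T ↑(S (P x)) := fun _ => rfl
  have hPle : ∀ x : H, ‖P x‖ ≤ ‖x‖ := by
    intro x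
    calc ‖P x‖ ≤ ‖P‖ * ‖x‖ := P.le_opNorm x
      _ ≤ 1 * ‖x‖ := by
          apply mul_le_mul_of_nonneg_right _ (norm_nonneg x)
          exact Submodule.orthogonalProjectionOnto_norm_le H₀
      _ = ‖x‖ := one_mul _
  have hAx_le : ∀ x : H, ‖A x‖ ≤ ‖x‖ := by
    intro x
    rw [hA_apply, hiso]
    calc ‖S (P x)‖ ≤ ‖P x‖ := hS1 _
      _ ≤ ‖x‖ := hPle x
  have hAx₀ : ‖A ↑x₀‖ = 1 := by
    have h1 : A ↑x₀ = T ↑x₀ := by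
      rw [hA_apply]
      rw [show P ↑x₀ = x₀ from Submodule.orthogonalProjectionOnto_mem_subspace_eq_self x₀, hx₀]
    rw [h1, hiso, hx₀n]
  have hx₀H : ‖(x₀ : H)‖ = 1 := by simpa using hx₀n
  have hAnorm : ‖A‖ = 1 := by
    apply le_antisymm
    · exact A.opNorm_le_bound zero_le_one (fun x => by simpa using hAx_le x)
    · have h3 := A.le_opNorm ↑x₀
      rw [hAx₀, hx₀H, mul_one] at h3
      exact h3
  clear_value A
  clear hA
  refine ⟨A, hAnorm, ?_, ?_⟩
  · -- the ε-Birkhoff-James orthogonality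
    intro l
    have hTu : ∀ n, (T + l • A) ↑(u n) = (1 + l * (ε + (1-ε)/2^n)) • T ↑(u n) := by
      intro n
      have hAu : A ↑(u n) = (ε + (1-ε)/2^n) • T ↑(u n) := by
        rw [hA_apply,
          show P ↑(u n) = u n from Submodule.orthogonalProjectionOnto_mem_subspace_eq_self (u n), huS,
          show ((((ε + (1-ε)/2^n) • u n : H₀)) : H) = (ε + (1-ε)/2^n) • ((u n : H)) from rfl,
          map_smul]
      rw [ContinuousLinearMap.add_apply, ContinuousLinearMap.smul_apply, hAu, smul_smul,
        add_smul, one_smul]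
    have hbound : ∀ n : ℕ, |1 + l * (ε + (1-ε) * (1/2)^n)| ≤ ‖T + l • A‖ := by
      intro n
      have h1 := (T + l • A).le_opNorm ↑(u n)
      have h2 : ‖(u n : H)‖ = 1 := by simpa using hun n
      rw [hTu n, norm_smul, hiso, hun n, mul_one, Real.norm_eq_abs, h2, mul_one] at h1
      have h3 : (1-ε)/2^n = (1-ε) * (1/2:ℝ)^n := by
        rw [div_eq_mul_inv, one_div, inv_pow]
      rw [← h3]
      exact h1
    have htend : Tendsto (fun n : ℕ => |1 + l * (ε + (1-ε) * (1/2)^n)|) atTop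
        (nhds |1 + l * ε|) := by
      have h2 : Tendsto (fun n : ℕ => ((1:ℝ)/2)^n) atTop (nhds 0) :=
        tendsto_pow_atTop_nhds_zero_of_lt_one (by norm_num) (by norm_num)
      have h3 : Tendsto (fun n : ℕ => ε + (1-ε) * (1/2)^n) atTop (nhds ε) := by
        have := (h2.const_mul (1-ε)).const_add ε
        simpa using this
      have h4 := ((h3.const_mul l).const_add 1).abs
      simpa [mul_comm] using h4
    have hge : |1 + l * ε| ≤ ‖T + l • A‖ := le_of_tendsto' htend hbound
    have hsq : (1 + l * ε)^2 ≤ ‖T + l • A‖^2 := by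
      nlinarith [abs_nonneg (1 + l * ε), sq_abs (1 + l * ε), norm_nonneg (T + l • A)]
    have hlA : ‖l • A‖ = |l| := by
      apply le_antisymm
      · have h6 := ContinuousLinearMap.opNorm_smul_le (𝕜' := ℝ) l A
        rwa [hAnorm, mul_one, Real.norm_eq_abs] at h6
      · have h1 := (l • A).le_opNorm ↑x₀
        rw [ContinuousLinearMap.smul_apply, norm_smul, hAx₀, mul_one, hx₀H, mul_one,
          Real.norm_eq_abs] at h1
        exact h1
    rw [hTnorm, hlA]
    have h5 : 0 ≤ ε * (l + |l|) := mul_nonneg hε0 (by linarith [neg_abs_le l])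
    have h7 : (1 + l * ε)^2 ≥ 1^2 - 2 * ε * 1 * |l| := by nlinarith [sq_nonneg (l * ε)]
    calc ‖T + l • A‖^2 ≥ (1 + l * ε)^2 := hsq
      _ ≥ 1^2 - 2 * ε * 1 * |l| := h7
  · -- the quantitative non-orthogonality on the norm attainment set
    intro x hx1 hx2
    have hxH : x ∈ H₀ := by
      have hmem : x ∈ {x : H | ‖x‖ = 1 ∧ ‖T x‖ = ‖T‖} := ⟨hx1, hx2⟩
      rw [hMT] at hmem
      exact hmem.1
    set y : H₀ := ⟨x, hxH⟩ with hy
    have hy0 : y ≠ 0 := by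
      intro h
      apply one_ne_zero (α := ℝ)
      rw [← hx1, show x = ((y : H)) from rfl, h]
      simp
    have hyn : ‖y‖ = 1 := by simpa using hx1
    have hAx : A x = T ↑(S y) := by
      rw [hA_apply]
      congr 1
      rw [show P x = P ↑y from rfl, Submodule.orthogonalProjectionOnto_mem_subspace_eq_self]
    have hTx : T x = T ↑y := rfl
    have hval : ⟪T x, A x⟫ = ⟪y, S y⟫ := by
      rw [hTx, hAx, hinner y (S y), Submodule.coe_inner]
    have hgt : ε < ⟪T x, A x⟫ := by
      rw [hval]
      have := hSpos y hy0
      rw [hyn] at this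
      simpa using this
    rw [hTnorm, hAnorm, mul_one, mul_one]
    calc ε < ⟪T x, A x⟫ := hgt
      _ ≤ |⟪T x, A x⟫| := le_abs_self _
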